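/- Discrete-time L2-gain certificate: let Q be finite with A_q, B_q, C_q real matrices, γ > 0, and suppose P is symmetric positive definite such that for all q ∈ Q the block matrix [[A_qᵀPA_q + C_qᵀC_q − P, A_qᵀPB_q], [B_qᵀPA_q, B_qᵀPB_q − γ²I]] is negative semidefinite. Then for every input u : ℕ → ℝᵐ and switching sequence q : ℕ → Q, the output y of x(t+1) = A_{q(t)}x(t) + B_{q(t)}u(t), x(0) = 0, y(t) = C_{q(t)}x(t) satisfies Σ_{t=0}^{T−1} ‖y(t)‖₂² ≤ γ² Σ_{t=0}^{T−1} ‖u(t)‖₂² for all T ∈ ℕ. -/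

import Mathlib

open Matrix

/-- discrete-time L2-gain certificate: if `P ≻ 0` is symmetric
and for all `q` the block matrix
`[[A_qᵀPA_q + C_qᵀC_q − P, A_qᵀPB_q], [B_qᵀPA_q, B_qᵀPB_q − γ²I]]` is negative
semidefinite, then along any trajectory `x(t+1) = A_{q(t)}x(t) + B_{q(t)}u(t)`,
`x(0) = 0`, `y(t) = C_{q(t)}x(t)`, one has
`Σ_{t<T} ‖y(t)‖² ≤ γ² Σ_{t<T} ‖u(t)‖²`. -/
theorem stmt17 {n m p : ℕ} {Q : Type*} [Fintype Q]
    (A : Q → Matrix (Fin n) (Fin n) ℝ)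
    (B : Q → Matrix (Fin n) (Fin m) ℝ)
    (C : Q → Matrix (Fin p) (Fin n) ℝ)
    (γ : ℝ) (hγ : 0 < γ)
    (P : Matrix (Fin n) (Fin n) ℝ) (hP : P.PosDef)
    (hLMI : ∀ q : Q, ∀ v : Fin n ⊕ Fin m → ℝ,
      v ⬝ᵥ ((Matrix.fromBlocks
        ((A q)ᵀ * P * A q + (C q)ᵀ * C q - P) ((A q)ᵀ * P * B q)
        ((B q)ᵀ * P * A q) ((B q)ᵀ * P * B q - γ ^ 2 • (1 : Matrix (Fin m) (Fin m) ℝ)))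
        *ᵥ v) ≤ 0)
    (u : ℕ → Fin m → ℝ) (q : ℕ → Q) (x : ℕ → Fin n → ℝ) (y : ℕ → Fin p → ℝ)
    (hx0 : x 0 = 0)
    (hx : ∀ t : ℕ, x (t + 1) = (A (q t)) *ᵥ (x t) + (B (q t)) *ᵥ (u t))
    (hy : ∀ t : ℕ, y t = (C (q t)) *ᵥ (x t))
    (T : ℕ) :
    ∑ t ∈ Finset.range T, ∑ i, (y t i) ^ 2 ≤
      γ ^ 2 * ∑ t ∈ Finset.range T, ∑ i, (u t i) ^ 2 := by
  set V : ℕ → ℝ := fun t => x t ⬝ᵥ (P *ᵥ x t) with hV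
  have key : ∀ t : ℕ,
      V (t + 1) - V t + y t ⬝ᵥ y t - γ ^ 2 * (u t ⬝ᵥ u t) ≤ 0 := by
    intro t
    have h := hLMI (q t) (Sum.elim (x t) (u t))
    rw [fromBlocks_mulVec, sumElim_dotProduct_sumElim] at h
    simp only [hV, hx t, hy t, Matrix.add_mulVec, Matrix.sub_mulVec,
      Matrix.mulVec_add, dotProduct_add, dotProduct_sub,
      Matrix.add_vecMul, add_dotProduct, sub_dotProduct,
      Sum.elim_comp_inl, Sum.elim_comp_inr,
      Matrix.smul_mulVec, Matrix.one_mulVec, dotProduct_smul,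
      smul_eq_mul, ← Matrix.mulVec_mulVec, dotProduct_mulVec,
      vecMul_transpose] at h ⊢
    nlinarith [h]
  have hVnonneg : ∀ t : ℕ, 0 ≤ V t := fun t =>
    by simpa using hP.posSemidef.dotProduct_mulVec_nonneg (x t)
  have hV0 : V 0 = 0 := by simp [hV, hx0]
  have main : ∀ T : ℕ, ∑ t ∈ Finset.range T, y t ⬝ᵥ y t + V T ≤
      γ ^ 2 * ∑ t ∈ Finset.range T, u t ⬝ᵥ u t := by
    intro T
    induction T with
    | zero => simp [hV0]
    | succ T ih =>
      rw [Finset.sum_range_succ, Finset.sum_range_succ, mul_add]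
      have := key T
      linarith
  have hmain := main T
  have hyeq : ∀ t, y t ⬝ᵥ y t = ∑ i, (y t i) ^ 2 := by
    intro t; simp [dotProduct, sq]
  have hueq : ∀ t, u t ⬝ᵥ u t = ∑ i, (u t i) ^ 2 := by
    intro t; simp [dotProduct, sq]
  simp only [hyeq, hueq] at hmain ⊢
  linarith [hVnonneg T]
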